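/- (Lemma 14: the projection onto an asymptotically normal full-rank matrix estimator is asymptotically normal.) Let Γ ∈ ℝ^{p×d} have full column rank d ≤ p, and for each n ∈ ℕ let Γ̂_n be a random p×d matrix on a probability space. Assume that √n (Γ̂_n − Γ) converges in distribution to a centered Gaussian measure μ on ℝ^{p×d}. Then √n (P_{Γ̂_n} − P_Γ) converges in distribution to the pushforward of μ under the linear map L : ℝ^{p×d} → ℝ^{p×p} given by L(E) := Q_Γ E (ΓᵀΓ)⁻¹ Γᵀ + Γ (ΓᵀΓ)⁻¹ Eᵀ Q_Γ; in particular, the limit is a centered Gaussian measure on ℝ^{p×p}. (In vec coordinates, if μ has covariance matrix V then the limit covariance is (I_{p²} + K_{pp})(Γ(ΓᵀΓ)⁻¹ ⊗ Q_Γ) V ((ΓᵀΓ)⁻¹Γᵀ ⊗ Q_Γ)(I_{p²} + K_{pp}).) -/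

import Mathlib

open Matrix MeasureTheory Filter

namespace Stmt11

attribute [local instance] Matrix.normedAddCommGroup Matrix.normedSpace

/-- Borel measurable structure on spaces of real matrices. -/
noncomputable local instance {m n : Type*} [Fintype m] [Fintype n] :
    MeasurableSpace (Matrix m n ℝ) := borel _

noncomputable local instance {m n : Type*} [Fintype m] [Fintype n] :
    BorelSpace (Matrix m n ℝ) := ⟨rfl⟩

/-- A centered Gaussian measure on a finite-dimensional real vector space: a probability
measure under which every continuous linear functional has a centered real Gaussian
distribution. -/
def IsCenteredGaussian {E : Type*} [NormedAddCommGroup E] [NormedSpace ℝ E]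
    [MeasurableSpace E] (μ : Measure E) : Prop :=
  IsProbabilityMeasure μ ∧
    ∀ L : E →L[ℝ] ℝ, ∃ v : NNReal, μ.map L = ProbabilityTheory.gaussianReal 0 v

/-- Convergence in distribution of a sequence of random elements to a probability
measure: weak convergence of the laws, i.e. convergence of integrals of all bounded
continuous test functions. -/
def TendstoInDistribution {Ω E : Type*} [MeasurableSpace Ω] [TopologicalSpace E]
    [MeasurableSpace E] (P : Measure Ω) (X : ℕ → Ω → E) (μ : Measure E) : Prop :=
  ∀ g : BoundedContinuousFunction E ℝ,
    Tendsto (fun n => ∫ ω, g (X n ω) ∂P) atTop (nhds (∫ x, g x ∂μ))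

/-- Orthogonal projection onto the column space of `M` (with the convention that the
inverse of a non-invertible matrix is the zero matrix). -/
noncomputable def proj {p d : ℕ} (M : Matrix (Fin p) (Fin d) ℝ) :
    Matrix (Fin p) (Fin p) ℝ :=
  M * (Mᵀ * M)⁻¹ * Mᵀ

/-- The linear map `E ↦ Q_Γ E (ΓᵀΓ)⁻¹ Γᵀ + Γ (ΓᵀΓ)⁻¹ Eᵀ Q_Γ`. -/
noncomputable def Lmap {p d : ℕ} (Γ : Matrix (Fin p) (Fin d) ℝ)
    (E : Matrix (Fin p) (Fin d) ℝ) : Matrix (Fin p) (Fin p) ℝ :=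
  ((1 : Matrix (Fin p) (Fin p) ℝ) - proj Γ) * E * (Γᵀ * Γ)⁻¹ * Γᵀ
    + Γ * (Γᵀ * Γ)⁻¹ * Eᵀ * ((1 : Matrix (Fin p) (Fin p) ℝ) - proj Γ)


/-- sup-norm bound on matrix products -/
lemma matnorm_mul_le {l m k : Type*} [Fintype l] [Fintype m] [Fintype k]
    (A : Matrix l m ℝ) (B : Matrix m k ℝ) :
    ‖A * B‖ ≤ (Fintype.card m : ℝ) * ‖A‖ * ‖B‖ := by
  have hnn : (0:ℝ) ≤ (Fintype.card m : ℝ) * ‖A‖ * ‖B‖ := by positivity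
  rw [Matrix.norm_le_iff hnn]
  intro i j
  calc ‖(A * B) i j‖ = ‖∑ x : m, A i x * B x j‖ := by rfl
    _ ≤ ∑ x : m, ‖A i x * B x j‖ := norm_sum_le _ _
    _ ≤ ∑ x : m, ‖A‖ * ‖B‖ := by
        refine Finset.sum_le_sum fun x _ => ?_
        rw [norm_mul]
        exact mul_le_mul (A.norm_entry_le_entrywise_sup_norm)
          (B.norm_entry_le_entrywise_sup_norm) (norm_nonneg _) (norm_nonneg _)
    _ = (Fintype.card m : ℝ) * ‖A‖ * ‖B‖ := by
        rw [Finset.sum_const, Finset.card_univ, nsmul_eq_mul, mul_assoc]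

lemma ibbm_mul {l m k : Type*} [Fintype l] [Fintype m] [Fintype k] :
    IsBoundedBilinearMap ℝ (fun q : Matrix l m ℝ × Matrix m k ℝ => q.1 * q.2) where
  add_left := fun A A' B => Matrix.add_mul A A' B
  smul_left := fun c A B => Matrix.smul_mul c A B
  add_right := fun A B B' => Matrix.mul_add A B B'
  smul_right := fun c A B => Matrix.mul_smul A c B
  bound := ⟨(Fintype.card m : ℝ) + 1, by positivity, fun A B => by
    calc ‖A * B‖ ≤ (Fintype.card m : ℝ) * ‖A‖ * ‖B‖ := matnorm_mul_le A B
      _ ≤ ((Fintype.card m : ℝ) + 1) * ‖A‖ * ‖B‖ := by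
          have : (0:ℝ) ≤ ‖A‖ * ‖B‖ := by positivity
          nlinarith⟩

noncomputable local instance instBorelNorm {m n : Type*} [Fintype m] [Fintype n] :
    @BorelSpace (Matrix m n ℝ) PseudoMetricSpace.toUniformSpace.toTopologicalSpace _ :=
  ⟨rfl⟩

variable {d : ℕ}

/-- derivative of matrix inversion as a continuous linear map -/
noncomputable def invDeriv (S : Matrix (Fin d) (Fin d) ℝ) :
    Matrix (Fin d) (Fin d) ℝ →L[ℝ] Matrix (Fin d) (Fin d) ℝ :=
  LinearMap.toContinuousLinearMap
    { toFun := fun H => -(S⁻¹ * H * S⁻¹)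
      map_add' := fun H K => by
        simp [Matrix.mul_add, Matrix.add_mul, neg_add, add_comm]
      map_smul' := fun c H => by
        simp [Matrix.mul_smul, Matrix.smul_mul] }

@[simp] lemma invDeriv_apply (S H : Matrix (Fin d) (Fin d) ℝ) :
    invDeriv S H = -(S⁻¹ * H * S⁻¹) := rfl

lemma hasFDerivAt_matrix_inv (S : Matrix (Fin d) (Fin d) ℝ) (hS : IsUnit S.det) :
    HasFDerivAt Inv.inv (invDeriv S) S := by
  refine hasFDerivAt_iff_isLittleO_nhds_zero.2 ?_
  -- remainder identity
  have key : ∀ h : Matrix (Fin d) (Fin d) ℝ, IsUnit (S + h).det →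
      (S + h)⁻¹ - S⁻¹ - invDeriv S h = (S + h)⁻¹ * h * S⁻¹ * h * S⁻¹ := by
    intro h hSh
    have e1 : S⁻¹ - (S + h)⁻¹ = (S + h)⁻¹ * h * S⁻¹ := by
      have e : (S + h)⁻¹ * ((S + h) * S⁻¹) = S⁻¹ := by
        rw [← Matrix.mul_assoc, Matrix.nonsing_inv_mul _ hSh, Matrix.one_mul]
      calc S⁻¹ - (S + h)⁻¹ = (S + h)⁻¹ * ((S + h) * S⁻¹) - (S + h)⁻¹ * 1 := by
            rw [e, Matrix.mul_one]
        _ = (S + h)⁻¹ * ((S + h) * S⁻¹ - 1) := by rw [Matrix.mul_sub]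
        _ = (S + h)⁻¹ * (h * S⁻¹) := by
            rw [Matrix.add_mul, Matrix.mul_nonsing_inv _ hS, add_sub_cancel_left]
        _ = (S + h)⁻¹ * h * S⁻¹ := by rw [Matrix.mul_assoc]
    have h0 : (S + h)⁻¹ - S⁻¹ = -((S + h)⁻¹ * h * S⁻¹) := by rw [← e1]; abel
    calc (S + h)⁻¹ - S⁻¹ - invDeriv S h
        = (S⁻¹ - (S + h)⁻¹) * h * S⁻¹ := by
          rw [invDeriv_apply, Matrix.sub_mul, Matrix.sub_mul, h0]; abel
      _ = (S + h)⁻¹ * h * S⁻¹ * h * S⁻¹ := by rw [e1]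
  -- eventual invertibility and boundedness of the inverse
  have hdet : ContinuousAt (fun h : Matrix (Fin d) (Fin d) ℝ => (S + h).det) 0 := by
    exact ((continuous_const.add continuous_id).matrix_det).continuousAt
  have hdetne : S.det ≠ 0 := by
    simpa using hS.ne_zero
  have hev1 : ∀ᶠ h : Matrix (Fin d) (Fin d) ℝ in nhds 0, IsUnit (S + h).det := by
    have : ∀ᶠ h : Matrix (Fin d) (Fin d) ℝ in nhds 0, (S + h).det ≠ 0 := by
      have := hdet.eventually_ne (by simpa using hdetne)
      simpa using this
    exact this.mono fun h hh => isUnit_iff_ne_zero.2 hh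
  have hinvc : ContinuousAt (fun h : Matrix (Fin d) (Fin d) ℝ => (S + h)⁻¹) 0 := by
    have h1 : ContinuousAt Inv.inv S := by
      apply continuousAt_matrix_inv
      have hR : (Ring.inverse : ℝ → ℝ) = Inv.inv := Ring.inverse_eq_inv'
      rw [hR]
      exact continuousAt_inv₀ hdetne
    have h1' : ContinuousAt Inv.inv ((fun h : Matrix (Fin d) (Fin d) ℝ => S + h) 0) := by
      simpa using h1
    exact h1'.comp ((continuous_const.add continuous_id).continuousAt (x := 0))
  have hev2 : ∀ᶠ h : Matrix (Fin d) (Fin d) ℝ in nhds 0,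
      ‖(S + h)⁻¹‖ ≤ ‖S⁻¹‖ + 1 := by
    have : ContinuousAt (fun h : Matrix (Fin d) (Fin d) ℝ => ‖(S + h)⁻¹‖) 0 :=
      hinvc.norm
    have h2 := this.eventually_le_const (by simp : ‖(S + (0:Matrix (Fin d) (Fin d) ℝ))⁻¹‖ < ‖S⁻¹‖ + 1)
    exact h2
  -- little-o estimate
  rw [Asymptotics.isLittleO_iff]
  intro c hc
  set Cd : ℝ := (Fintype.card (Fin d) : ℝ) + 1 with hCd
  have hCdpos : (0:ℝ) < Cd := by positivity
  set K : ℝ := Cd^4 * (‖S⁻¹‖ + 1) * ‖S⁻¹‖^2 + 1 with hK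
  have hKpos : (0:ℝ) < K := by positivity
  have hev3 : ∀ᶠ h : Matrix (Fin d) (Fin d) ℝ in nhds 0, ‖h‖ ≤ c / K := by
    have : ContinuousAt (fun h : Matrix (Fin d) (Fin d) ℝ => ‖h‖) 0 := continuous_norm.continuousAt
    exact this.eventually_le_const (by simpa using div_pos hc hKpos)
  filter_upwards [hev1, hev2, hev3] with h h1 h2 h3
  erw [key h h1]
  have hcard : (Fintype.card (Fin d) : ℝ) ≤ Cd := by rw [hCd]; linarith
  have mulb : ∀ A B : Matrix (Fin d) (Fin d) ℝ, ‖A * B‖ ≤ Cd * ‖A‖ * ‖B‖ := fun A B =>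
    (matnorm_mul_le A B).trans (mul_le_mul_of_nonneg_right
      (mul_le_mul_of_nonneg_right hcard (norm_nonneg A)) (norm_nonneg B))
  set X := (S + h)⁻¹ with hX
  have step : ‖X * h * S⁻¹ * h * S⁻¹‖ ≤ Cd^4 * ‖X‖ * ‖S⁻¹‖^2 * ‖h‖^2 := by
    calc ‖X * h * S⁻¹ * h * S⁻¹‖ ≤ Cd * ‖X * h * S⁻¹ * h‖ * ‖S⁻¹‖ := mulb _ _
      _ ≤ Cd * (Cd * ‖X * h * S⁻¹‖ * ‖h‖) * ‖S⁻¹‖ := by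
          gcongr; exact mulb _ _
      _ ≤ Cd * (Cd * (Cd * ‖X * h‖ * ‖S⁻¹‖) * ‖h‖) * ‖S⁻¹‖ := by
          gcongr; exact mulb _ _
      _ ≤ Cd * (Cd * (Cd * (Cd * ‖X‖ * ‖h‖) * ‖S⁻¹‖) * ‖h‖) * ‖S⁻¹‖ := by
          gcongr; exact mulb _ _
      _ = Cd^4 * ‖X‖ * ‖S⁻¹‖^2 * ‖h‖^2 := by ring
  have hKb : Cd^4 * ‖X‖ * ‖S⁻¹‖^2 ≤ K := by
    have h4 : Cd^4 * ‖X‖ * ‖S⁻¹‖^2 ≤ Cd^4 * (‖S⁻¹‖ + 1) * ‖S⁻¹‖^2 := by gcongr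
    linarith
  have hnn : (0:ℝ) ≤ ‖h‖ := norm_nonneg h
  calc ‖X * h * S⁻¹ * h * S⁻¹‖ ≤ Cd^4 * ‖X‖ * ‖S⁻¹‖^2 * ‖h‖^2 := step
    _ ≤ K * ‖h‖^2 := mul_le_mul_of_nonneg_right hKb (sq_nonneg _)
    _ = (K * ‖h‖) * ‖h‖ := by ring
    _ ≤ c * ‖h‖ := by
        refine mul_le_mul_of_nonneg_right ?_ hnn
        calc K * ‖h‖ ≤ K * (c / K) := mul_le_mul_of_nonneg_left h3 (le_of_lt hKpos)
          _ = c := by field_simp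


variable {p : ℕ}

lemma Lmap_add (Γ : Matrix (Fin p) (Fin d) ℝ) (E F : Matrix (Fin p) (Fin d) ℝ) :
    Lmap Γ (E + F) = Lmap Γ E + Lmap Γ F := by
  simp only [Lmap, Matrix.add_mul, Matrix.mul_add, Matrix.transpose_add]
  abel

lemma Lmap_smul (Γ : Matrix (Fin p) (Fin d) ℝ) (c : ℝ) (E : Matrix (Fin p) (Fin d) ℝ) :
    Lmap Γ (c • E) = c • Lmap Γ E := by
  simp only [Lmap, Matrix.transpose_smul, Matrix.smul_mul, Matrix.mul_smul, smul_add]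

/-- `Lmap` as a continuous linear map. -/
noncomputable def LmapCLM (Γ : Matrix (Fin p) (Fin d) ℝ) :
    @ContinuousLinearMap ℝ ℝ _ _ (RingHom.id ℝ) (Matrix (Fin p) (Fin d) ℝ)
      PseudoMetricSpace.toUniformSpace.toTopologicalSpace _ (Matrix (Fin p) (Fin p) ℝ)
      PseudoMetricSpace.toUniformSpace.toTopologicalSpace _ _ _ :=
  LinearMap.toContinuousLinearMap
    { toFun := Lmap Γ
      map_add' := Lmap_add Γ
      map_smul' := Lmap_smul Γ }

@[simp] lemma LmapCLM_apply (Γ E : Matrix (Fin p) (Fin d) ℝ) :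
    LmapCLM Γ E = Lmap Γ E := rfl

/-- transpose as a continuous linear map -/
noncomputable def transCLM : Matrix (Fin p) (Fin d) ℝ →L[ℝ] Matrix (Fin d) (Fin p) ℝ :=
  LinearMap.toContinuousLinearMap
    (Matrix.transposeLinearEquiv (Fin p) (Fin d) ℝ ℝ).toLinearMap

@[simp] lemma transCLM_apply (M : Matrix (Fin p) (Fin d) ℝ) : transCLM M = Mᵀ := rfl

lemma hasFDerivAt_proj (Γ : Matrix (Fin p) (Fin d) ℝ) (hrank : IsUnit (Γᵀ * Γ).det) :
    HasFDerivAt proj (LmapCLM Γ) Γ := by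
  set S := Γᵀ * Γ with hSdef
  have hb1 := (ibbm_mul (l := Fin d) (m := Fin p) (k := Fin d)).hasFDerivAt (Γᵀ, Γ)
  have hi : HasFDerivAt (fun M : Matrix (Fin p) (Fin d) ℝ => (Mᵀ, M))
      (transCLM.prod (ContinuousLinearMap.id ℝ _)) Γ :=
    (transCLM.hasFDerivAt).prodMk (hasFDerivAt_id Γ)
  have h1 := HasFDerivAt.comp (f := fun M : Matrix (Fin p) (Fin d) ℝ => (Mᵀ, M)) Γ hb1 hi
  have h1' : HasFDerivAt (fun M : Matrix (Fin p) (Fin d) ℝ => Mᵀ * M)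
      (((ibbm_mul (l := Fin d) (m := Fin p) (k := Fin d)).deriv (Γᵀ, Γ)).comp
        (transCLM.prod (ContinuousLinearMap.id ℝ _))) Γ := h1
  have h2 := HasFDerivAt.comp (f := fun M : Matrix (Fin p) (Fin d) ℝ => Mᵀ * M) Γ
    (hasFDerivAt_matrix_inv S hrank) h1'
  have h2' : HasFDerivAt (fun M : Matrix (Fin p) (Fin d) ℝ => (Mᵀ * M)⁻¹)
      ((invDeriv S).comp (((ibbm_mul (l := Fin d) (m := Fin p) (k := Fin d)).deriv (Γᵀ, Γ)).comp
        (transCLM.prod (ContinuousLinearMap.id ℝ _)))) Γ := h2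
  have hb3 := (ibbm_mul (l := Fin p) (m := Fin d) (k := Fin d)).hasFDerivAt (Γ, S⁻¹)
  have h3 := HasFDerivAt.comp (f := fun M : Matrix (Fin p) (Fin d) ℝ => (M, (Mᵀ * M)⁻¹)) Γ hb3
    ((hasFDerivAt_id Γ).prodMk h2')
  have h3' : HasFDerivAt (fun M : Matrix (Fin p) (Fin d) ℝ => M * (Mᵀ * M)⁻¹)
      (((ibbm_mul (l := Fin p) (m := Fin d) (k := Fin d)).deriv (Γ, S⁻¹)).comp
        ((ContinuousLinearMap.id ℝ _).prod
          ((invDeriv S).comp (((ibbm_mul (l := Fin d) (m := Fin p) (k := Fin d)).deriv (Γᵀ, Γ)).comp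
            (transCLM.prod (ContinuousLinearMap.id ℝ _)))))) Γ := h3
  have hb4 := (ibbm_mul (l := Fin p) (m := Fin d) (k := Fin p)).hasFDerivAt (Γ * S⁻¹, Γᵀ)
  have h4 := HasFDerivAt.comp (f := fun M : Matrix (Fin p) (Fin d) ℝ => (M * (Mᵀ * M)⁻¹, Mᵀ)) Γ hb4
    (h3'.prodMk transCLM.hasFDerivAt)
  have hD : (((ibbm_mul (l := Fin p) (m := Fin d) (k := Fin p)).deriv (Γ * S⁻¹, Γᵀ)).comp
      (((((ibbm_mul (l := Fin p) (m := Fin d) (k := Fin d)).deriv (Γ, S⁻¹)).comp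
        ((ContinuousLinearMap.id ℝ _).prod
          ((invDeriv S).comp (((ibbm_mul (l := Fin d) (m := Fin p) (k := Fin d)).deriv (Γᵀ, Γ)).comp
            (transCLM.prod (ContinuousLinearMap.id ℝ _))))))).prod transCLM)) = LmapCLM Γ := by
    refine ContinuousLinearMap.ext fun H => ?_
    show Γ * S⁻¹ * Hᵀ + (Γ * (-(S⁻¹ * (Γᵀ * H + Hᵀ * Γ) * S⁻¹)) + H * S⁻¹) * Γᵀ = Lmap Γ H
    simp only [Lmap, proj, ← hSdef]
    simp only [Matrix.sub_mul, Matrix.mul_sub, Matrix.one_mul, Matrix.mul_one,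
      Matrix.add_mul, Matrix.mul_add, Matrix.neg_mul, Matrix.mul_neg, Matrix.mul_assoc]
    abel
  rw [hD] at h4
  exact h4

lemma measurable_matrix_inv :
    Measurable (Inv.inv : Matrix (Fin d) (Fin d) ℝ → Matrix (Fin d) (Fin d) ℝ) := by
  have hfun : (Inv.inv : Matrix (Fin d) (Fin d) ℝ → Matrix (Fin d) (Fin d) ℝ)
      = fun M => (M.det)⁻¹ • M.adjugate := by
    funext M
    rw [Matrix.inv_def, Ring.inverse_eq_inv]
  rw [hfun]
  have hdet : Measurable fun M : Matrix (Fin d) (Fin d) ℝ => (M.det)⁻¹ :=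
    (continuous_id.matrix_det).measurable.inv
  have hadj : Measurable fun M : Matrix (Fin d) (Fin d) ℝ => M.adjugate :=
    (continuous_id.matrix_adjugate).measurable
  exact (continuous_smul.measurable).comp (hdet.prodMk hadj)

lemma measurable_proj :
    Measurable (proj : Matrix (Fin p) (Fin d) ℝ → Matrix (Fin p) (Fin p) ℝ) := by
  have hT : Continuous (fun M : Matrix (Fin p) (Fin d) ℝ => Mᵀ * M) := by
    have h := (ibbm_mul (l := Fin d) (m := Fin p) (k := Fin d)).continuous.comp
      (transCLM.continuous.prodMk continuous_id)
    exact h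
  have hS : Measurable fun M : Matrix (Fin p) (Fin d) ℝ => (Mᵀ * M)⁻¹ :=
    measurable_matrix_inv.comp hT.measurable
  have h2 : Measurable fun M : Matrix (Fin p) (Fin d) ℝ => M * (Mᵀ * M)⁻¹ := by
    have h := ((ibbm_mul (l := Fin p) (m := Fin d) (k := Fin d)).continuous.measurable).comp
      (measurable_id.prodMk hS)
    exact h
  have h3 : Measurable fun M : Matrix (Fin p) (Fin d) ℝ => M * (Mᵀ * M)⁻¹ * Mᵀ := by
    have h := ((ibbm_mul (l := Fin p) (m := Fin d) (k := Fin p)).continuous.measurable).comp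
      (h2.prodMk transCLM.continuous.measurable)
    exact h
  exact h3

/-- cutoff function: `0` on the ball of radius `R`, `1` outside radius `R + 1` -/
noncomputable def cut (R : ℝ) : BoundedContinuousFunction (Matrix (Fin p) (Fin d) ℝ) ℝ :=
  BoundedContinuousFunction.mkOfBound
    ⟨fun x => min 1 (max (‖x‖ - R) 0), by
      apply Continuous.min continuous_const
      exact Continuous.max (continuous_norm.sub continuous_const) continuous_const⟩
    1 (by
      intro x y
      have h1 : (0:ℝ) ≤ min 1 (max (‖x‖ - R) 0) := le_min one_pos.le (le_max_right _ _)
      have h2 : min 1 (max (‖x‖ - R) 0) ≤ 1 := min_le_left _ _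
      have h3 : (0:ℝ) ≤ min 1 (max (‖y‖ - R) 0) := le_min one_pos.le (le_max_right _ _)
      have h4 : min 1 (max (‖y‖ - R) 0) ≤ 1 := min_le_left _ _
      rw [Real.dist_eq, abs_sub_le_iff]
      constructor <;> simp only [ContinuousMap.coe_mk] <;> linarith)

lemma cut_apply (R : ℝ) (x : Matrix (Fin p) (Fin d) ℝ) :
    cut R x = min 1 (max (‖x‖ - R) 0) := rfl

lemma cut_nonneg (R : ℝ) (x : Matrix (Fin p) (Fin d) ℝ) : 0 ≤ cut R x := by
  rw [cut_apply]; exact le_min one_pos.le (le_max_right _ _)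

lemma cut_le_one (R : ℝ) (x : Matrix (Fin p) (Fin d) ℝ) : cut R x ≤ 1 := by
  rw [cut_apply]; exact min_le_left _ _

lemma cut_eq_zero {R : ℝ} {x : Matrix (Fin p) (Fin d) ℝ} (h : ‖x‖ ≤ R) : cut R x = 0 := by
  have h0 : max (‖x‖ - R) 0 = 0 := max_eq_right (by linarith)
  rw [cut_apply, h0]
  exact min_eq_right one_pos.le

lemma cut_eq_one {R : ℝ} {x : Matrix (Fin p) (Fin d) ℝ} (h : R + 1 ≤ ‖x‖) : cut R x = 1 := by
  have h0 : max (‖x‖ - R) 0 = ‖x‖ - R := max_eq_left (by linarith)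
  rw [cut_apply, h0]
  exact min_eq_left (by linarith)

lemma eventually_lt_sqrt (m : ℝ) : ∀ᶠ n : ℕ in atTop, m < Real.sqrt n := by
  obtain ⟨N, hN⟩ := exists_nat_gt (m ^ 2)
  filter_upwards [eventually_ge_atTop N] with n hn
  rcases le_or_gt 0 m with hm | hm
  · rw [Real.lt_sqrt hm]
    calc m ^ 2 < (N : ℝ) := hN
      _ ≤ (n : ℝ) := by exact_mod_cast hn
  · exact lt_of_lt_of_le hm (Real.sqrt_nonneg _)

set_option maxHeartbeats 2000000 in
/-- asymptotic normality of the projection onto an asymptotically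
normal full-rank matrix estimator. If `√n (Γ̂_n − Γ)` converges in distribution to a
centered Gaussian measure `μ`, then `√n (P_{Γ̂_n} − P_Γ)` converges in distribution to
the pushforward of `μ` under the linear map `L`, and this limit is a centered Gaussian
measure. -/
theorem statement11 {p d : ℕ} (hd : d ≤ p)
    (Γ : Matrix (Fin p) (Fin d) ℝ) (hrank : IsUnit (Γᵀ * Γ).det)
    {Ω : Type*} [MeasurableSpace Ω] (P : Measure Ω) [IsProbabilityMeasure P]
    (Γhat : ℕ → Ω → Matrix (Fin p) (Fin d) ℝ)
    (hmeas : ∀ n, Measurable (Γhat n))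
    (μ : Measure (Matrix (Fin p) (Fin d) ℝ)) (hμ : IsCenteredGaussian μ)
    (hconv : TendstoInDistribution P
      (fun n ω => (Real.sqrt n) • (Γhat n ω - Γ)) μ) :
    TendstoInDistribution P
        (fun n ω => (Real.sqrt n) • (proj (Γhat n ω) - proj Γ))
        (μ.map (Lmap Γ))
      ∧ IsCenteredGaussian (μ.map (Lmap Γ)) := by
  classical
  obtain ⟨hμProb, hμGauss⟩ := hμ
  haveI := hμProb
  set L := LmapCLM Γ with hLdef
  have hLmeas : Measurable (Lmap Γ) := L.continuous.measurable
  have gauss : IsCenteredGaussian (μ.map (Lmap Γ)) := by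
    constructor
    · exact MeasureTheory.Measure.isProbabilityMeasure_map hLmeas.aemeasurable
    · intro φ
      obtain ⟨v, hv⟩ := hμGauss (φ.comp L)
      refine ⟨v, ?_⟩
      rw [Measure.map_map φ.continuous.measurable hLmeas]
      exact hv
  refine ⟨?_, gauss⟩
  intro g
  -- measurability facts
  have hZmeas : ∀ n : ℕ, Measurable (fun ω => (Real.sqrt n) • (Γhat n ω - Γ)) := fun n =>
    (((continuous_id.sub continuous_const).const_smul (Real.sqrt n)).measurable).comp (hmeas n)
  have hAmeas : ∀ n : ℕ, Measurable (fun ω => (Real.sqrt n) • (proj (Γhat n ω) - proj Γ)) :=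
    fun n =>
    ((((continuous_id.sub continuous_const).const_smul
      (Real.sqrt n)).measurable).comp measurable_proj).comp (hmeas n)
  have hint : ∀ (f : Ω → Matrix (Fin p) (Fin p) ℝ), Measurable f →
      Integrable (fun ω => g (f ω)) P := fun f hf =>
    Integrable.mono' (integrable_const ‖g‖)
      ((g.continuous.measurable.comp hf).aestronglyMeasurable)
      (Filter.Eventually.of_forall fun ω => g.norm_coe_le_norm _)
  have hintD : ∀ (h : BoundedContinuousFunction (Matrix (Fin p) (Fin d) ℝ) ℝ)
      (f : Ω → Matrix (Fin p) (Fin d) ℝ), Measurable f →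
      Integrable (fun ω => h (f ω)) P := fun h f hf =>
    Integrable.mono' (integrable_const ‖h‖)
      ((h.continuous.measurable.comp hf).aestronglyMeasurable)
      (Filter.Eventually.of_forall fun ω => h.norm_coe_le_norm _)
  have step0 : ∫ x, g x ∂(μ.map (Lmap Γ)) = ∫ x, g (L x) ∂μ :=
    integral_map hLmeas.aemeasurable g.continuous.aestronglyMeasurable
  have hgL : Tendsto (fun n : ℕ => ∫ ω, g (L ((Real.sqrt n) • (Γhat n ω - Γ))) ∂P) atTop
      (nhds (∫ x, g (L x) ∂μ)) := hconv (g.compContinuous ⟨⇑L, L.continuous⟩)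
  have key : Tendsto (fun n : ℕ =>
      (∫ ω, g ((Real.sqrt n) • (proj (Γhat n ω) - proj Γ)) ∂P)
        - ∫ ω, g (L ((Real.sqrt n) • (Γhat n ω - Γ))) ∂P) atTop (nhds 0) := by
    rw [NormedAddCommGroup.tendsto_nhds_zero]
    intro ε hε
    set η := ε / (8 * (‖g‖ + 1)) with hη
    have hηpos : 0 < η := by positivity
    -- tightness of μ
    have hμtail : Tendsto (fun k : ℕ => ∫ x, cut (k : ℝ) x ∂μ) atTop (nhds 0) := by
      have h0 : (0:ℝ) = ∫ _x : Matrix (Fin p) (Fin d) ℝ, (0:ℝ) ∂μ := by simp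
      rw [h0]
      apply tendsto_integral_of_dominated_convergence (fun _ => (1:ℝ))
      · exact fun k => ((cut ((k:ℕ):ℝ)).continuous.measurable.aestronglyMeasurable)
      · exact integrable_const 1
      · intro k
        refine Filter.Eventually.of_forall fun x => ?_
        rw [Real.norm_eq_abs, abs_of_nonneg (cut_nonneg _ _)]
        exact cut_le_one _ _
      · refine Filter.Eventually.of_forall fun x => ?_
        have hev0 : ∀ᶠ k : ℕ in atTop, cut ((k:ℕ):ℝ) x = 0 := by
          obtain ⟨K, hK⟩ := exists_nat_ge ‖x‖
          filter_upwards [eventually_ge_atTop K] with k hk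
          exact cut_eq_zero (le_trans hK (by exact_mod_cast hk))
        exact Tendsto.congr' (hev0.mono fun k hk => hk.symm) tendsto_const_nhds
    obtain ⟨k, hk⟩ : ∃ k : ℕ, ∫ x, cut (k:ℝ) x ∂μ < η :=
      (hμtail.eventually_lt_const hηpos).exists
    set R : ℝ := (k : ℝ) + 1 with hR
    have hRpos : 0 < R := by positivity
    -- tail bound for Z n
    have htail : ∀ᶠ n : ℕ in atTop,
        (P {ω | R < ‖(Real.sqrt n) • (Γhat n ω - Γ)‖}).toReal ≤ 2 * η := by
      have h2 := (hconv (cut (k:ℝ))).eventually_lt_const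
        (show ∫ x, cut (k:ℝ) x ∂μ < 2*η by linarith)
      filter_upwards [h2] with n hn
      set s := {ω | R < ‖(Real.sqrt n) • (Γhat n ω - Γ)‖} with hs
      have hsmeas : MeasurableSet s := measurableSet_lt measurable_const ((hZmeas n).norm)
      have hind : ∀ ω, s.indicator (fun _ => (1:ℝ)) ω
          ≤ cut (k:ℝ) ((Real.sqrt n) • (Γhat n ω - Γ)) := by
        intro ω
        by_cases hω : ω ∈ s
        · rw [Set.indicator_of_mem hω]
          have hωR : R ≤ ‖(Real.sqrt n) • (Γhat n ω - Γ)‖ := le_of_lt hω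
          rw [cut_eq_one (by rw [hR] at hωR; exact hωR)]
        · rw [Set.indicator_of_notMem hω]; exact cut_nonneg _ _
      have hPle : (P s).toReal ≤ ∫ ω, cut (k:ℝ) ((Real.sqrt n) • (Γhat n ω - Γ)) ∂P := by
        have he : (P s).toReal = ∫ ω, s.indicator (fun _ => (1:ℝ)) ω ∂P :=
          (integral_indicator_one hsmeas).symm
        rw [he]
        exact integral_mono ((integrable_const (1:ℝ)).indicator hsmeas)
          (hintD (cut (k:ℝ)) _ (hZmeas n)) hind
      linarith
    -- uniform continuity of g on a large ball
    set C := ‖L‖ * R + 1 with hC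
    have hCpos : 0 < C := by positivity
    have huc := (isCompact_closedBall (0 : Matrix (Fin p) (Fin p) ℝ)
      C).uniformContinuousOn_of_continuous g.continuous.continuousOn
    obtain ⟨δg, hδgpos, hδg⟩ := Metric.uniformContinuousOn_iff.1 huc (ε/4) (by positivity)
    have hmδ : 0 < min δg 1 := lt_min hδgpos one_pos
    set c0 := min δg 1 / (2 * (R + 1)) with hc0
    have hc0pos : 0 < c0 := by positivity
    -- derivative estimate
    have hder := hasFDerivAt_proj Γ hrank
    replace hder := hasFDerivAt_iff_isLittleO_nhds_zero.1 hder
    have hev := Asymptotics.isLittleO_iff.1 hder hc0pos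
    rw [Metric.eventually_nhds_iff] at hev
    obtain ⟨δ, hδpos, hδ⟩ := hev
    filter_upwards [htail, eventually_lt_sqrt (max 1 (R / δ))] with n hn1 hn2
    set sn := Real.sqrt n with hsn
    have hsn1 : (1:ℝ) ≤ sn := le_of_lt (lt_of_le_of_lt (le_max_left _ _) hn2)
    have hsnpos : 0 < sn := lt_of_lt_of_le one_pos hsn1
    have hsnR : R / δ < sn := lt_of_le_of_lt (le_max_right _ _) hn2
    set s := {ω | R < ‖sn • (Γhat n ω - Γ)‖} with hsdef
    have hsmeas : MeasurableSet s := measurableSet_lt measurable_const ((hZmeas n).norm)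
    -- pointwise estimate
    have hpoint : ∀ ω, ‖g (sn • (proj (Γhat n ω) - proj Γ)) - g (L (sn • (Γhat n ω - Γ)))‖
        ≤ ε/4 + (2*‖g‖) * s.indicator (fun _ => (1:ℝ)) ω := by
      intro ω
      by_cases hω : ω ∈ s
      · rw [Set.indicator_of_mem hω, mul_one]
        have b1 := norm_sub_le (g (sn • (proj (Γhat n ω) - proj Γ)))
          (g (L (sn • (Γhat n ω - Γ))))
        have b2 := g.norm_coe_le_norm (sn • (proj (Γhat n ω) - proj Γ))
        have b3 := g.norm_coe_le_norm (L (sn • (Γhat n ω - Γ)))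
        linarith
      · rw [Set.indicator_of_notMem hω, mul_zero, add_zero]
        have hZR : ‖sn • (Γhat n ω - Γ)‖ ≤ R := le_of_not_gt hω
        set z := sn • (Γhat n ω - Γ) with hz
        have hΓhat : Γhat n ω = Γ + sn⁻¹ • z := by
          rw [hz, smul_smul, inv_mul_cancel₀ (ne_of_gt hsnpos), one_smul]
          abel
        have hsmall : dist (sn⁻¹ • z) 0 < δ := by
          rw [dist_zero_right, norm_smul, Real.norm_eq_abs,
            abs_of_pos (inv_pos.2 hsnpos)]
          rw [div_lt_iff₀ hδpos] at hsnR
          calc sn⁻¹ * ‖z‖ ≤ sn⁻¹ * R :=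
                mul_le_mul_of_nonneg_left hZR (le_of_lt (inv_pos.2 hsnpos))
            _ < sn⁻¹ * (sn * δ) := mul_lt_mul_of_pos_left hsnR (inv_pos.2 hsnpos)
            _ = δ := by field_simp
        have hrem := hδ hsmall
        have hznorm : ‖sn⁻¹ • z‖ = sn⁻¹ * ‖z‖ := by
          rw [norm_smul, Real.norm_eq_abs, abs_of_pos (inv_pos.2 hsnpos)]
        have hAZ : ‖sn • (proj (Γhat n ω) - proj Γ) - L z‖ ≤ min δg 1 / 2 := by
          have hLz : L z = sn • (L (sn⁻¹ • z)) := by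
            rw [← L.map_smul, smul_smul, mul_inv_cancel₀ (ne_of_gt hsnpos), one_smul]
          rw [hΓhat, hLz, ← smul_sub, norm_smul, Real.norm_eq_abs, abs_of_pos hsnpos]
          have : sn * ‖proj (Γ + sn⁻¹ • z) - proj Γ - L (sn⁻¹ • z)‖ ≤ sn * (c0 * ‖sn⁻¹ • z‖) :=
            mul_le_mul_of_nonneg_left hrem (le_of_lt hsnpos)
          have e : sn * (c0 * ‖sn⁻¹ • z‖) = c0 * ‖z‖ := by
            rw [hznorm]; field_simp
          have hc0R : c0 * ‖z‖ ≤ min δg 1 / 2 := by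
            have h1 : c0 * ‖z‖ ≤ c0 * R := mul_le_mul_of_nonneg_left hZR (le_of_lt hc0pos)
            have h2 : c0 * R ≤ min δg 1 / 2 := by
              rw [hc0]
              rw [div_mul_eq_mul_div, div_le_div_iff₀ (by positivity) (by norm_num)]
              nlinarith [hmδ]
            exact le_trans h1 h2
          calc sn * ‖proj (Γ + sn⁻¹ • z) - proj Γ - L (sn⁻¹ • z)‖
              ≤ sn * (c0 * ‖sn⁻¹ • z‖) := this
            _ = c0 * ‖z‖ := e
            _ ≤ min δg 1 / 2 := hc0R
        have hLzC : ‖L z‖ ≤ ‖L‖ * R := by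
          calc ‖L z‖ ≤ ‖L‖ * ‖z‖ := L.le_opNorm z
            _ ≤ ‖L‖ * R := mul_le_mul_of_nonneg_left hZR (norm_nonneg L)
        have hmem1 : sn • (proj (Γhat n ω) - proj Γ) ∈ Metric.closedBall
            (0 : Matrix (Fin p) (Fin p) ℝ) C := by
          rw [mem_closedBall_zero_iff]
          have := norm_le_norm_add_norm_sub' (sn • (proj (Γhat n ω) - proj Γ)) (L z)
          have hd2 : min δg 1 / 2 ≤ 1 := by
            have : min δg 1 ≤ 1 := min_le_right _ _
            linarith
          calc ‖sn • (proj (Γhat n ω) - proj Γ)‖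
              ≤ ‖L z‖ + ‖sn • (proj (Γhat n ω) - proj Γ) - L z‖ := by
                have h9 := norm_sub_norm_le (sn • (proj (Γhat n ω) - proj Γ)) (L z)
                linarith [h9]
            _ ≤ ‖L‖ * R + min δg 1 / 2 := add_le_add hLzC hAZ
            _ ≤ C := by rw [hC]; linarith
        have hmem2 : L z ∈ Metric.closedBall (0 : Matrix (Fin p) (Fin p) ℝ) C := by
          rw [mem_closedBall_zero_iff]
          rw [hC]; linarith
        have hdist : dist (sn • (proj (Γhat n ω) - proj Γ)) (L z) < δg := by
          rw [dist_eq_norm]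
          have : min δg 1 / 2 < δg := by
            have : min δg 1 ≤ δg := min_le_left _ _
            linarith
          linarith [hAZ]
        have := hδg _ hmem1 _ hmem2 hdist
        rw [dist_eq_norm] at this
        exact le_of_lt this
    -- integrate the pointwise bound
    have hintA : Integrable (fun ω => g (sn • (proj (Γhat n ω) - proj Γ))) P :=
      hint _ (hAmeas n)
    have hintL : Integrable (fun ω => g (L (sn • (Γhat n ω - Γ)))) P :=
      hint (fun ω => L (sn • (Γhat n ω - Γ))) (L.continuous.measurable.comp (hZmeas n))
    have hterm : Integrable (fun ω => ε/4 + (2*‖g‖) * s.indicator (fun _ => (1:ℝ)) ω) P :=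
      (integrable_const _).add (((integrable_const (1:ℝ)).indicator hsmeas).const_mul _)
    have hbound : ∫ ω, ‖g (sn • (proj (Γhat n ω) - proj Γ))
        - g (L (sn • (Γhat n ω - Γ)))‖ ∂P
        ≤ ε/4 + (2*‖g‖) * (P s).toReal := by
      have hI : ∫ ω, (ε/4 + (2*‖g‖) * s.indicator (fun _ => (1:ℝ)) ω) ∂P
          = ε/4 + (2*‖g‖) * (P s).toReal := by
        rw [integral_add (integrable_const _)
          (((integrable_const (1:ℝ)).indicator hsmeas).const_mul _)]
        rw [integral_const]
        simp only [probReal_univ, one_smul]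
        congr 1
        rw [integral_const_mul]
        congr 1
        exact integral_indicator_one hsmeas
      rw [← hI]
      exact integral_mono (hintA.sub hintL).norm hterm hpoint
    have hfin : ‖(∫ ω, g (sn • (proj (Γhat n ω) - proj Γ)) ∂P)
        - ∫ ω, g (L (sn • (Γhat n ω - Γ))) ∂P‖ < ε := by
      rw [← integral_sub hintA hintL]
      have h1 := norm_integral_le_integral_norm (μ := P)
        (fun ω => g (sn • (proj (Γhat n ω) - proj Γ)) - g (L (sn • (Γhat n ω - Γ))))
      have h2 : (2*‖g‖) * (P s).toReal ≤ (2*‖g‖) * (2*η) := by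
        apply mul_le_mul_of_nonneg_left _ (by positivity)
        exact hn1
      have h3 : (2*‖g‖) * (2*η) ≤ ε / 2 := by
        have hg1 : (0:ℝ) < ‖g‖ + 1 := by positivity
        have he : (2*‖g‖) * (2*η) = ‖g‖ * ε / (2 * (‖g‖+1)) := by
          rw [hη]; field_simp; ring
        rw [he, div_le_iff₀ (by positivity)]
        nlinarith [norm_nonneg g, hε]
      calc ‖∫ ω, (g (sn • (proj (Γhat n ω) - proj Γ)) - g (L (sn • (Γhat n ω - Γ)))) ∂P‖
          ≤ ∫ ω, ‖g (sn • (proj (Γhat n ω) - proj Γ)) - g (L (sn • (Γhat n ω - Γ)))‖ ∂P := h1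
        _ ≤ ε/4 + (2*‖g‖) * (P s).toReal := hbound
        _ ≤ ε/4 + ε/2 := by linarith
        _ < ε := by linarith
    exact hfin
  have hfun2 : (fun n : ℕ => ∫ ω, g ((Real.sqrt n) • (proj (Γhat n ω) - proj Γ)) ∂P)
      = fun n : ℕ => ((∫ ω, g ((Real.sqrt n) • (proj (Γhat n ω) - proj Γ)) ∂P)
          - ∫ ω, g (L ((Real.sqrt n) • (Γhat n ω - Γ))) ∂P)
        + ∫ ω, g (L ((Real.sqrt n) • (Γhat n ω - Γ))) ∂P := by
    funext n; ring
  rw [step0]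
  have hfinal := key.add hgL
  rw [zero_add] at hfinal
  rw [hfun2]
  exact hfinal

end Stmt11
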